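/- (Three-point sufficient decrease under relative strong convexity.) Let f : H → ℝ be differentiable on U with both A − f and f − A convex on U, and let r : H → ℝ be convex. Let τ ∈ (0,1], θ ∈ U, and let θ⁺ ∈ U be a minimizer over U of the function θ' ↦ r(θ') + ⟨∇f(θ), θ' − θ⟩ + (1/τ) d_A(θ', θ). Then for every θ' ∈ U: τ · [(f(θ⁺) + r(θ⁺)) − (f(θ') + r(θ'))] ≤ (1 − τ) · d_A(θ', θ) − (1 − τ) · d_A(θ⁺, θ) − d_A(θ', θ⁺). -/

import Mathlib

open scoped RealInnerProductSpace

section Aux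

variable {H : Type*} [NormedAddCommGroup H] [InnerProductSpace ℝ H] [CompleteSpace H]

/-- If `φ` has gradient `g` at `x` and `φ (x + t v) - φ x ≥ c t` for small positive `t`,
then `c ≤ ⟪g, v⟫`. -/
lemma dir_le {φ : H → ℝ} {g x : H} (hφ : HasGradientAt φ g x) (v : H) (c : ℝ)
    (h : ∀ t : ℝ, t ∈ Set.Ioo (0:ℝ) 1 → c * t ≤ φ (x + t • v) - φ x) :
    c ≤ ⟪g, v⟫ := by
  have hline : HasDerivAt (fun t : ℝ => x + t • v) v 0 := by
    simpa using ((hasDerivAt_id (0:ℝ)).smul_const v).const_add x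
  have hF : HasFDerivAt φ (InnerProductSpace.toDualMap ℝ H g) x :=
    hasGradientAt_iff_hasFDerivAt.mp hφ
  have hF' : HasFDerivAt φ (InnerProductSpace.toDualMap ℝ H g)
      ((fun t : ℝ => x + t • v) 0) := by simpa using hF
  have hψ : HasDerivAt (fun t : ℝ => φ (x + t • v)) ⟪g, v⟫ 0 := by
    simpa [Function.comp_def] using hF'.comp_hasDerivAt 0 hline
  have hslope := hasDerivAt_iff_tendsto_slope.mp hψ
  have hslope' : Filter.Tendsto (slope (fun t : ℝ => φ (x + t • v)) 0)
      (nhdsWithin 0 (Set.Ioi 0)) (nhds ⟪g, v⟫) :=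
    hslope.mono_left (nhdsWithin_mono _ (fun t ht => ne_of_gt ht))
  refine ge_of_tendsto hslope' ?_
  filter_upwards [Ioo_mem_nhdsGT_of_mem (by norm_num : (0:ℝ) ∈ Set.Ico (0:ℝ) 1)] with t ht
  have ht0 : (0:ℝ) < t := ht.1
  have hsl : slope (fun t : ℝ => φ (x + t • v)) 0 t = (φ (x + t • v) - φ x) / t := by
    rw [slope_def_field]
    simp
  rw [hsl, le_div_iff₀ ht0]
  exact h t ht

/-- Gradient inequality for a convex function on a convex set. -/
lemma grad_ineq {U : Set H} (hUc : Convex ℝ U) {φ : H → ℝ} (hφc : ConvexOn ℝ U φ)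
    {g x : H} (hg : HasGradientAt φ g x) (hx : x ∈ U) {y : H} (hy : y ∈ U) :
    ⟪g, y - x⟫ ≤ φ y - φ x := by
  have hneg : HasGradientAt (fun z => -φ z) (-g) x := by
    rw [hasGradientAt_iff_hasFDerivAt] at hg ⊢
    have := hg.fun_neg
    simpa [map_neg] using this
  have key := dir_le hneg (y - x) (φ x - φ y) ?_
  · simpa [inner_neg_left] using neg_le_neg key
  · intro t ht
    have hmem : x + t • (y - x) ∈ U := by
      have := hUc hx hy (by linarith [ht.1, ht.2] : (0:ℝ) ≤ 1 - t) (le_of_lt ht.1) (by ring)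
      convert this using 1
      module
    have hcvx := hφc.2 hx hy (by linarith [ht.2] : (0:ℝ) ≤ 1 - t) (le_of_lt ht.1) (by ring)
    have heq : (1 - t) • x + t • y = x + t • (y - x) := by module
    rw [heq] at hcvx
    simp only [smul_eq_mul] at hcvx
    nlinarith [hcvx]

end Aux

/-- Three-point sufficient decrease under 1-relative smoothness and 1-relative strong
convexity (`A - f` and `f - A` both convex on `U`): for a Bregman proximal-gradient step
with `τ ∈ (0,1]` from `θ` to `θ⁺`, for every `θ' ∈ U`,
`τ (F(θ⁺) - F(θ')) ≤ (1-τ) d_A(θ', θ) - (1-τ) d_A(θ⁺, θ) - d_A(θ', θ⁺)`, `F = f + r`. -/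
theorem statement15
    {H : Type*} [NormedAddCommGroup H] [InnerProductSpace ℝ H] [FiniteDimensional ℝ H]
    (U : Set H) (hUo : IsOpen U) (hUc : Convex ℝ U)
    (A : H → ℝ) (hAconv : ConvexOn ℝ U A)
    (gA : H → H) (hgA : ∀ θ ∈ U, HasGradientAt A (gA θ) θ)
    (dA : H → H → ℝ) (hdA : ∀ θ θ', dA θ θ' = A θ - A θ' - ⟪gA θ', θ - θ'⟫)
    (f : H → ℝ) (gf : H → H) (hgf : ∀ θ ∈ U, HasGradientAt f (gf θ) θ)
    (hrel : ConvexOn ℝ U (fun θ => A θ - f θ))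
    (hrel' : ConvexOn ℝ U (fun θ => f θ - A θ))
    (r : H → ℝ) (hr : ConvexOn ℝ Set.univ r)
    (τ : ℝ) (hτ : τ ∈ Set.Ioc (0:ℝ) 1)
    (θ θp : H) (hθ : θ ∈ U) (hθp : θp ∈ U)
    (hmin : ∀ θ' ∈ U,
      r θp + ⟪gf θ, θp - θ⟫ + (1/τ) * dA θp θ ≤
      r θ' + ⟪gf θ, θ' - θ⟫ + (1/τ) * dA θ' θ) :
    ∀ θ' ∈ U,
      τ * ((f θp + r θp) - (f θ' + r θ')) ≤
        (1 - τ) * dA θ' θ - (1 - τ) * dA θp θ - dA θ' θp := by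
  intro θ' hθ'
  obtain ⟨hτ0, hτ1⟩ := hτ
  have hτne : τ ≠ 0 := ne_of_gt hτ0
  -- gradient of A - f and f - A at θ
  have hAF : HasGradientAt (fun z => A z - f z) (gA θ - gf θ) θ := by
    rw [hasGradientAt_iff_hasFDerivAt] at *
    simpa [map_sub] using (hasGradientAt_iff_hasFDerivAt.mp (hgA θ hθ)).fun_sub
      (hasGradientAt_iff_hasFDerivAt.mp (hgf θ hθ))
  have hFA : HasGradientAt (fun z => f z - A z) (gf θ - gA θ) θ := by
    rw [hasGradientAt_iff_hasFDerivAt] at *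
    simpa [map_sub] using (hasGradientAt_iff_hasFDerivAt.mp (hgf θ hθ)).fun_sub
      (hasGradientAt_iff_hasFDerivAt.mp (hgA θ hθ))
  -- (S) relative smoothness at θp
  have hS : f θp ≤ f θ + ⟪gf θ, θp - θ⟫ + dA θp θ := by
    have := grad_ineq hUc hrel hAF hθ hθp
    rw [hdA]
    simp only [inner_sub_left] at this ⊢
    linarith
  -- (C) relative strong convexity at θ'
  have hC : f θ + ⟪gf θ, θ' - θ⟫ + dA θ' θ ≤ f θ' := by
    have := grad_ineq hUc hrel' hFA hθ hθ'
    rw [hdA]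
    simp only [inner_sub_left] at this ⊢
    linarith
  -- (O) optimality: directional derivative inequality at θp
  have hO : r θp - r θ' ≤ ⟪gf θ, θ' - θp⟫ + (1/τ) * (⟪gA θp, θ' - θp⟫ - ⟪gA θ, θ' - θp⟫) := by
    set φ : H → ℝ := fun z => ⟪gf θ, z - θ⟫ + (1/τ) * (A z - A θ - ⟪gA θ, z - θ⟫) with hφdef
    have hφg : HasGradientAt φ (gf θ + (1/τ) • (gA θp - gA θ)) θp := by
      rw [hasGradientAt_iff_hasFDerivAt]
      have h1 : HasFDerivAt (fun z : H => ⟪gf θ, z - θ⟫)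
          (InnerProductSpace.toDualMap ℝ H (gf θ)) θp := by
        have : HasFDerivAt (fun z : H => ⟪gf θ, z⟫ - ⟪gf θ, θ⟫)
            (InnerProductSpace.toDualMap ℝ H (gf θ)) θp :=
          (InnerProductSpace.toDualMap ℝ H (gf θ)).toContinuousLinearMap.hasFDerivAt.sub_const _
        refine this.congr_of_eventuallyEq (Filter.Eventually.of_forall fun z => ?_)
        simp [inner_sub_right]
      have h2 : HasFDerivAt (fun z : H => A z - A θ - ⟪gA θ, z - θ⟫)
          (InnerProductSpace.toDualMap ℝ H (gA θp - gA θ)) θp := by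
        have hA' := hasGradientAt_iff_hasFDerivAt.mp (hgA θp hθp)
        have h3 : HasFDerivAt (fun z : H => ⟪gA θ, z - θ⟫)
            (InnerProductSpace.toDualMap ℝ H (gA θ)) θp := by
          have : HasFDerivAt (fun z : H => ⟪gA θ, z⟫ - ⟪gA θ, θ⟫)
              (InnerProductSpace.toDualMap ℝ H (gA θ)) θp :=
            (InnerProductSpace.toDualMap ℝ H (gA θ)).toContinuousLinearMap.hasFDerivAt.sub_const _
          refine this.congr_of_eventuallyEq (Filter.Eventually.of_forall fun z => ?_)
          simp [inner_sub_right]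
        exact ((hA'.sub_const (A θ)).fun_sub h3).congr_fderiv (by ext; simp [inner_sub_left])
      have := h1.add ((h2.const_smul (1/τ)))
      refine HasFDerivAt.congr_fderiv (this.congr_of_eventuallyEq
        (Filter.Eventually.of_forall fun z => ?_)) ?_
      · simp [hφdef, smul_eq_mul]
      · ext z
        simp [map_add, map_smul, inner_add_left, inner_smul_left, real_inner_smul_left]
    have key := dir_le hφg (θ' - θp) (r θp - r θ') ?_
    · rw [inner_add_left, real_inner_smul_left, inner_sub_left] at key
      linarith
    · intro t ht
      set z := θp + t • (θ' - θp) with hz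
      have hmem : z ∈ U := by
        have := hUc hθp hθ' (by linarith [ht.2] : (0:ℝ) ≤ 1 - t) (le_of_lt ht.1) (by ring)
        convert this using 1
        rw [hz]; module
      have hrz : r z ≤ (1 - t) * r θp + t * r θ' := by
        have := hr.2 (Set.mem_univ θp) (Set.mem_univ θ')
          (by linarith [ht.2] : (0:ℝ) ≤ 1 - t) (le_of_lt ht.1) (by ring)
        have heq : (1 - t) • θp + t • θ' = z := by rw [hz]; module
        rw [heq] at this
        simpa using this
      have hm := hmin z hmem
      rw [hdA, hdA] at hm
      have hφz : φ z - φ θp = (⟪gf θ, z - θ⟫ + (1/τ) * (A z - A θ - ⟪gA θ, z - θ⟫))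
          - (⟪gf θ, θp - θ⟫ + (1/τ) * (A θp - A θ - ⟪gA θ, θp - θ⟫)) := rfl
      rw [hφz]
      nlinarith [hm, hrz]
  -- three-point identity
  have hid : dA θ' θ - dA θp θ - dA θ' θp = ⟪gA θp, θ' - θp⟫ - ⟪gA θ, θ' - θp⟫ := by
    simp only [hdA, inner_sub_right]
    ring
  -- combine
  have hinner : ⟪gf θ, θ' - θ⟫ = ⟪gf θ, θ' - θp⟫ + ⟪gf θ, θp - θ⟫ := by
    simp only [inner_sub_right]; ring
  have hOτ : τ * (r θp - r θ') ≤ τ * ⟪gf θ, θ' - θp⟫ + (dA θ' θ - dA θp θ - dA θ' θp) := by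
    have := mul_le_mul_of_nonneg_left hO (le_of_lt hτ0)
    rw [hid]
    calc τ * (r θp - r θ') ≤ τ * (⟪gf θ, θ' - θp⟫
        + (1/τ) * (⟪gA θp, θ' - θp⟫ - ⟪gA θ, θ' - θp⟫)) := this
      _ = τ * ⟪gf θ, θ' - θp⟫ + (⟪gA θp, θ' - θp⟫ - ⟪gA θ, θ' - θp⟫) := by
          field_simp
  nlinarith [hS, hC, hOτ, hinner, mul_le_mul_of_nonneg_left hS (le_of_lt hτ0),
    mul_le_mul_of_nonneg_left hC (le_of_lt hτ0)]
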